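/- Let G act on a probability space (X, μ) by measure-preserving transformations, let (π, H, ξ) be a unitary representation of G on a Hilbert space with a unit vector ξ such that ⟨π(g)ξ, ξ⟩ = μ(Fix(g)) for all g ∈ G, and let H₀ be the closed cyclic subspace generated by {π(g)ξ : g ∈ G}. If {gₙ} ⊆ G is a Cauchy sequence with respect to the pseudometric d(g,h) = μ({x : g·x ≠ h·x}), then the restricted operators π(gₙ)|_{H₀} converge in the strong operator topology. -/

import Mathlib

open MeasureTheory Filter

/-- If `⟨π(g)ξ, ξ⟩ = μ(Fix g)` for a unitary representation `π` and unit vector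
`ξ`, and `{gₙ}` is Cauchy in the uniform pseudometric
`d(g,h) = μ{x : g·x ≠ h·x}`, then the operators `π(gₙ)` converge strongly on
the cyclic subspace generated by `ξ`. -/
theorem groupoid_representation_continuity {G X H : Type*} [Group G] [Countable G]
    [MulAction G X] [MeasurableSpace X]
    [NormedAddCommGroup H] [InnerProductSpace ℂ H] [CompleteSpace H]
    (μ : Measure X) [IsProbabilityMeasure μ]
    (hmp : ∀ g : G, MeasurePreserving (fun x : X => g • x) μ μ)
    (hmeas : ∀ g h : G, MeasurableSet {x : X | g • x ≠ h • x})
    (π : G →* unitary (H →L[ℂ] H)) (ξ : H) (hξ : ‖ξ‖ = 1)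
    (hchar : ∀ g : G,
      (inner ℂ ((π g : H →L[ℂ] H) ξ) ξ : ℂ) = ((μ {x : X | g • x = x}).toReal : ℂ))
    (gs : ℕ → G)
    (hcauchy : ∀ ε : ℝ, 0 < ε → ∃ N, ∀ n ≥ N, ∀ m ≥ N,
      (μ {x : X | gs n • x ≠ gs m • x}).toReal < ε) :
    ∀ v ∈ (Submodule.span ℂ
        (Set.range fun g : G => (π g : H →L[ℂ] H) ξ)).topologicalClosure,
      ∃ w : H, Tendsto (fun n => (π (gs n) : H →L[ℂ] H) v) atTop (nhds w) := by
  classical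
  have hnorm : ∀ (g : G) (v : H), ‖(π g : H →L[ℂ] H) v‖ = ‖v‖ :=
    fun g v => Unitary.norm_map (π g) v
  have happ : ∀ (g h : G) (v : H),
      (π (g * h) : H →L[ℂ] H) v = (π g : H →L[ℂ] H) ((π h : H →L[ℂ] H) v) := by
    intro g h v
    simp [map_mul]
  -- the measure computation: μ(Fix(k⁻¹h⁻¹gk)) = μ{x | g•x = h•x}
  have hmeasure : ∀ g h k : G,
      μ {x : X | (k⁻¹ * h⁻¹ * g * k) • x = x} = μ {x : X | g • x = h • x} := by
    intro g h k
    have hset : {x : X | (k⁻¹ * h⁻¹ * g * k) • x = x}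
        = (fun x : X => k • x) ⁻¹' {x : X | g • x = h • x} := by
      ext x
      simp only [Set.mem_setOf_eq, Set.mem_preimage, mul_smul, inv_smul_eq_iff]
    have hms : MeasurableSet {x : X | g • x = h • x} := by
      have : {x : X | g • x = h • x} = {x : X | g • x ≠ h • x}ᶜ := by
        ext x; simp [Set.mem_setOf_eq]
      rw [this]
      exact (hmeas g h).compl
    rw [hset]
    exact (hmp k).measure_preimage hms.nullMeasurableSet
  -- key norm computation
  have key : ∀ g h k : G,
      ‖(π g : H →L[ℂ] H) ((π k : H →L[ℂ] H) ξ)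
        - (π h : H →L[ℂ] H) ((π k : H →L[ℂ] H) ξ)‖ ^ 2
      = 2 * (μ {x : X | g • x ≠ h • x}).toReal := by
    intro g h k
    set a := (π g : H →L[ℂ] H) ((π k : H →L[ℂ] H) ξ) with ha
    set b := (π h : H →L[ℂ] H) ((π k : H →L[ℂ] H) ξ) with hb
    have hna : ‖a‖ = 1 := by rw [ha, hnorm, hnorm, hξ]
    have hnb : ‖b‖ = 1 := by rw [hb, hnorm, hnorm, hξ]
    have hinner : (inner ℂ a b : ℂ)
        = ((μ {x : X | g • x = h • x}).toReal : ℂ) := by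
      have h1 : a = (π (h * k) : H →L[ℂ] H)
          ((π ((h * k)⁻¹ * (g * k)) : H →L[ℂ] H) ξ) := by
        rw [ha, ← happ, ← happ]
        congr 1
        group
      have h2 : b = (π (h * k) : H →L[ℂ] H) ξ := by rw [hb, ← happ]
      rw [h1, h2, Unitary.inner_map_map]
      have : (h * k)⁻¹ * (g * k) = k⁻¹ * h⁻¹ * g * k := by group
      rw [this, hchar, hmeasure g h k]
    have hns : ‖a - b‖ ^ 2 = ‖a‖ ^ 2 - 2 * RCLike.re (inner ℂ a b : ℂ) + ‖b‖ ^ 2 := by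
      rw [@norm_sub_sq ℂ]
    have hre : RCLike.re (inner ℂ a b : ℂ) = (μ {x : X | g • x = h • x}).toReal := by
      rw [hinner]; simp
    have hsum : (μ {x : X | g • x ≠ h • x}).toReal
        + (μ {x : X | g • x = h • x}).toReal = 1 := by
      have hcompl : {x : X | g • x = h • x} = {x : X | g • x ≠ h • x}ᶜ := by
        ext x; simp [Set.mem_setOf_eq]
      rw [hcompl]
      have hadd := measure_add_measure_compl (μ := μ) (hmeas g h)
      have hfin1 : μ {x : X | g • x ≠ h • x} ≠ ⊤ := measure_ne_top μ _
      have hfin2 : μ {x : X | g • x ≠ h • x}ᶜ ≠ ⊤ := measure_ne_top μ _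
      rw [← ENNReal.toReal_add hfin1 hfin2, hadd]
      simp
    rw [hns, hna, hnb, hre]
    linarith
  -- Cauchy property on the span
  have spanC : ∀ w ∈ Submodule.span ℂ (Set.range fun g : G => (π g : H →L[ℂ] H) ξ),
      ∀ ε : ℝ, 0 < ε → ∃ N, ∀ n ≥ N, ∀ m ≥ N,
        ‖(π (gs n) : H →L[ℂ] H) w - (π (gs m) : H →L[ℂ] H) w‖ < ε := by
    intro w hw
    induction hw using Submodule.span_induction with
    | mem w hw =>
      obtain ⟨k, rfl⟩ := hw
      intro ε hε
      obtain ⟨N, hN⟩ := hcauchy (ε ^ 2 / 2) (by positivity)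
      refine ⟨N, fun n hn m hm => ?_⟩
      have hk := key (gs n) (gs m) k
      have h2 := hN n hn m hm
      have hlt : ‖(π (gs n) : H →L[ℂ] H) ((π k : H →L[ℂ] H) ξ)
          - (π (gs m) : H →L[ℂ] H) ((π k : H →L[ℂ] H) ξ)‖ ^ 2 < ε ^ 2 := by
        rw [hk]; linarith
      exact lt_of_pow_lt_pow_left₀ 2 hε.le hlt
    | zero =>
      intro ε hε
      exact ⟨0, fun n _ m _ => by simpa using hε⟩
    | add w₁ w₂ _ _ ih₁ ih₂ =>
      intro ε hε
      obtain ⟨N₁, hN₁⟩ := ih₁ (ε / 2) (by linarith)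
      obtain ⟨N₂, hN₂⟩ := ih₂ (ε / 2) (by linarith)
      refine ⟨max N₁ N₂, fun n hn m hm => ?_⟩
      have h1 := hN₁ n (le_trans (le_max_left _ _) hn) m (le_trans (le_max_left _ _) hm)
      have h2 := hN₂ n (le_trans (le_max_right _ _) hn) m (le_trans (le_max_right _ _) hm)
      calc ‖(π (gs n) : H →L[ℂ] H) (w₁ + w₂) - (π (gs m) : H →L[ℂ] H) (w₁ + w₂)‖
          = ‖((π (gs n) : H →L[ℂ] H) w₁ - (π (gs m) : H →L[ℂ] H) w₁)
            + ((π (gs n) : H →L[ℂ] H) w₂ - (π (gs m) : H →L[ℂ] H) w₂)‖ := by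
            rw [map_add, map_add]; congr 1; abel
        _ ≤ ‖(π (gs n) : H →L[ℂ] H) w₁ - (π (gs m) : H →L[ℂ] H) w₁‖
            + ‖(π (gs n) : H →L[ℂ] H) w₂ - (π (gs m) : H →L[ℂ] H) w₂‖ := norm_add_le _ _
        _ < ε / 2 + ε / 2 := add_lt_add h1 h2
        _ = ε := by ring
    | smul c w _ ih =>
      intro ε hε
      rcases eq_or_ne c 0 with rfl | hc
      · exact ⟨0, fun n _ m _ => by simpa using hε⟩
      · have hc' : 0 < ‖c‖ := norm_pos_iff.mpr hc
        obtain ⟨N, hN⟩ := ih (ε / ‖c‖) (by positivity)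
        refine ⟨N, fun n hn m hm => ?_⟩
        have h1 := hN n hn m hm
        have : ‖(π (gs n) : H →L[ℂ] H) (c • w) - (π (gs m) : H →L[ℂ] H) (c • w)‖
            = ‖c‖ * ‖(π (gs n) : H →L[ℂ] H) w - (π (gs m) : H →L[ℂ] H) w‖ := by
          rw [(π (gs n) : H →L[ℂ] H).map_smul, (π (gs m) : H →L[ℂ] H).map_smul, ← smul_sub, norm_smul]
        rw [this]
        calc ‖c‖ * ‖(π (gs n) : H →L[ℂ] H) w - (π (gs m) : H →L[ℂ] H) w‖
            < ‖c‖ * (ε / ‖c‖) := by exact mul_lt_mul_of_pos_left h1 hc'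
          _ = ε := by rw [mul_comm, div_mul_cancel₀ ε hc'.ne']
  -- conclude
  intro v hv
  have hvcl : v ∈ closure ((Submodule.span ℂ
      (Set.range fun g : G => (π g : H →L[ℂ] H) ξ) : Submodule ℂ H) : Set H) := hv
  have hCauchy : CauchySeq (fun n => (π (gs n) : H →L[ℂ] H) v) := by
    rw [Metric.cauchySeq_iff]
    intro ε hε
    obtain ⟨w, hw, hdist⟩ := Metric.mem_closure_iff.mp hvcl (ε / 3) (by linarith)
    obtain ⟨N, hN⟩ := spanC w hw (ε / 3) (by linarith)
    refine ⟨N, fun n hn m hm => ?_⟩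
    have h1 := hN n hn m hm
    have hvw : ‖v - w‖ < ε / 3 := by
      rw [← dist_eq_norm]; exact hdist
    rw [dist_eq_norm]
    calc ‖(π (gs n) : H →L[ℂ] H) v - (π (gs m) : H →L[ℂ] H) v‖
        = ‖(π (gs n) : H →L[ℂ] H) (v - w)
          + ((π (gs n) : H →L[ℂ] H) w - (π (gs m) : H →L[ℂ] H) w)
          + ((π (gs m) : H →L[ℂ] H) (w - v))‖ := by
          rw [map_sub, map_sub]; congr 1; abel
      _ ≤ ‖(π (gs n) : H →L[ℂ] H) (v - w)‖
          + ‖(π (gs n) : H →L[ℂ] H) w - (π (gs m) : H →L[ℂ] H) w‖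
          + ‖(π (gs m) : H →L[ℂ] H) (w - v)‖ := norm_add₃_le
      _ = ‖v - w‖ + ‖(π (gs n) : H →L[ℂ] H) w - (π (gs m) : H →L[ℂ] H) w‖
          + ‖w - v‖ := by rw [hnorm, hnorm]
      _ < ε / 3 + ε / 3 + ε / 3 := by
          have := hvw
          have h2 : ‖w - v‖ < ε / 3 := by rwa [norm_sub_rev]
          linarith
      _ = ε := by ring
  exact cauchySeq_tendsto_of_complete hCauchy
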